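/- Let (Ω, 𝒜, ℙ) be a probability space and let X, Y : Ω → ℝ be random variables. Then the supremum of Corr[g(X), h(Y)] over all admissible antimonotone pairs (g, h) equals the supremum, over all Borel functions k : ℝ → ℝ, all nondecreasing h₁ : ℝ → ℝ and all nonincreasing h₂ : ℝ → ℝ such that the pair (h₁ ∘ k, h₂ ∘ k) is admissible, of Corr[h₁(k(X)), h₂(k(Y))]. -/

import Mathlib

open MeasureTheory ProbabilityTheory

/-- The Pearson correlation coefficient of two real-valued random variables. -/
noncomputable def corr {Ω : Type*} [MeasurableSpace Ω] (P : Measure Ω) (U V : Ω → ℝ) : ℝ :=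
  (∫ ω, (U ω - ∫ ω', U ω' ∂P) * (V ω - ∫ ω', V ω' ∂P) ∂P) /
    (Real.sqrt (variance U P) * Real.sqrt (variance V P))

/-- A pair `(g, h)` of Borel functions is admissible for `(X, Y)` if `g ∘ X` and `h ∘ Y`
both have finite, strictly positive variance. -/
def Admissible {Ω : Type*} [MeasurableSpace Ω] (P : Measure Ω) (X Y : Ω → ℝ)
    (g h : ℝ → ℝ) : Prop :=
  Measurable g ∧ Measurable h ∧
    MemLp (fun ω => g (X ω)) 2 P ∧ MemLp (fun ω => h (Y ω)) 2 P ∧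
    0 < variance (fun ω => g (X ω)) P ∧ 0 < variance (fun ω => h (Y ω)) P

/-- Two functions are antimonotone if increments always disagree in sign. -/
def Antimonotone {α : Type*} (g h : α → ℝ) : Prop :=
  ∀ x x', (g x - g x') * (h x - h x') ≤ 0

/-- McShane-type monotone extension: the infimum envelope. -/
noncomputable def mcshane (g h : ℝ → ℝ) (t : ℝ) : ℝ :=
  ⨅ x : ℝ, (g x + max (t - (g x - h x)) 0)

section mcshane

variable {g h : ℝ → ℝ} (anti : Antimonotone g h)

lemma mcshane_key (anti : Antimonotone g h) (x x' : ℝ) :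
    g x' ≤ g x + max ((g x' - h x') - (g x - h x)) 0 := by
  have H := anti x x'
  rcases le_or_gt ((g x' - h x') - (g x - h x)) 0 with c | c
  · rw [max_eq_right c]; nlinarith
  · rw [max_eq_left c.le]; nlinarith

lemma mcshane_term_lb (anti : Antimonotone g h) (t x : ℝ) :
    g 0 - max ((g 0 - h 0) - t) 0 ≤ g x + max (t - (g x - h x)) 0 := by
  have hk := mcshane_key anti x 0
  have : max ((g 0 - h 0) - (g x - h x)) 0
      ≤ max (t - (g x - h x)) 0 + max ((g 0 - h 0) - t) 0 := by
    refine max_le ?_ ?_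
    · have h1 : t - (g x - h x) ≤ max (t - (g x - h x)) 0 := le_max_left _ _
      have h2 : (g 0 - h 0) - t ≤ max ((g 0 - h 0) - t) 0 := le_max_left _ _
      linarith
    · have h1 : (0:ℝ) ≤ max (t - (g x - h x)) 0 := le_max_right _ _
      have h2 : (0:ℝ) ≤ max ((g 0 - h 0) - t) 0 := le_max_right _ _
      linarith
  linarith

lemma mcshane_bddBelow (anti : Antimonotone g h) (t : ℝ) :
    BddBelow (Set.range fun x => g x + max (t - (g x - h x)) 0) := by
  exact ⟨g 0 - max ((g 0 - h 0) - t) 0, by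
    rintro y ⟨x, rfl⟩; exact mcshane_term_lb anti t x⟩

lemma mcshane_comp (anti : Antimonotone g h) (x' : ℝ) :
    mcshane g h (g x' - h x') = g x' := by
  refine le_antisymm ?_ ?_
  · have := ciInf_le (mcshane_bddBelow anti (g x' - h x')) x'
    simpa [mcshane] using this
  · exact le_ciInf fun x => mcshane_key anti x x'

lemma mcshane_mono (anti : Antimonotone g h) : Monotone (mcshane g h) := by
  intro t t' htt
  refine le_ciInf fun x => ?_
  refine le_trans (ciInf_le (mcshane_bddBelow anti t) x) ?_
  have : max (t - (g x - h x)) 0 ≤ max (t' - (g x - h x)) 0 :=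
    max_le_max (by linarith) le_rfl
  linarith

lemma mcshane_lipschitz (anti : Antimonotone g h) {t t' : ℝ} (htt : t ≤ t') :
    mcshane g h t' ≤ mcshane g h t + (t' - t) := by
  have h1 : mcshane g h t' - (t' - t) ≤ mcshane g h t := by
    refine le_ciInf fun x => ?_
    have h2 := ciInf_le (mcshane_bddBelow anti t') x
    have h3 : max (t' - (g x - h x)) 0 ≤ max (t - (g x - h x)) 0 + (t' - t) := by
      refine max_le ?_ ?_
      · have := le_max_left (t - (g x - h x)) 0; linarith
      · have := le_max_right (t - (g x - h x)) 0; linarith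
    simp only [mcshane] at h2 ⊢
    linarith
  linarith

end mcshane

theorem anti_correlation_eq_sup_over_common_factor
    {Ω : Type*} [MeasurableSpace Ω] (P : Measure Ω) [IsProbabilityMeasure P]
    (X Y : Ω → ℝ) (hX : Measurable X) (hY : Measurable Y) :
    sSup {r : ℝ | ∃ g h : ℝ → ℝ, Admissible P X Y g h ∧ Antimonotone g h ∧
        r = corr P (fun ω => g (X ω)) (fun ω => h (Y ω))} =
      sSup {r : ℝ | ∃ k h₁ h₂ : ℝ → ℝ, Measurable k ∧ Monotone h₁ ∧ Antitone h₂ ∧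
        Admissible P X Y (h₁ ∘ k) (h₂ ∘ k) ∧
        r = corr P (fun ω => h₁ (k (X ω))) (fun ω => h₂ (k (Y ω)))} := by
  congr 1
  ext r
  constructor
  · rintro ⟨g, h, adm, anti, rfl⟩
    refine ⟨fun t => g t - h t, mcshane g h, fun t => mcshane g h t - t, ?_, ?_, ?_, ?_, ?_⟩
    · exact (adm.1.sub adm.2.1)
    · exact mcshane_mono anti
    · intro t t' htt
      have := mcshane_lipschitz anti htt
      dsimp only
      linarith
    · have hg : (mcshane g h ∘ fun t => g t - h t) = g :=
        funext fun t => mcshane_comp anti t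
      have hh : ((fun t => mcshane g h t - t) ∘ fun t => g t - h t) = h := by
        funext t
        have := mcshane_comp anti t
        simp only [Function.comp_apply]
        linarith
      rw [hg, hh]
      exact adm
    · have hg : ∀ t, mcshane g h (g t - h t) = g t := fun t => mcshane_comp anti t
      have hh : ∀ t, mcshane g h (g t - h t) - (g t - h t) = h t := by
        intro t; have := mcshane_comp anti t; linarith
      simp only [hg, hh]
      congr 1
      funext ω
      ring
  · rintro ⟨k, h₁, h₂, hk, hm, ha, adm, rfl⟩
    refine ⟨h₁ ∘ k, h₂ ∘ k, adm, ?_, rfl⟩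
    intro x x'
    simp only [Function.comp_apply]
    rcases le_total (k x) (k x') with c | c
    · have h1 := hm c
      have h2 := ha c
      nlinarith
    · have h1 := hm c
      have h2 := ha c
      nlinarith
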